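/- Let G_1, G_2 be graphs on the same n vertices whose adjacency matrices A_1, A_2 belong to a symmetric association scheme with first eigenmatrix P and degrees k_1, k_2. Then γ(G_1,G_2) := max{ ⟨(L+K)/2, M⟩ : M ⪰ 0, diag(M) = 1 } = (n/2)·((k_1 + k_2) + max_{0 ≤ l ≤ d} (P_{l2} − P_{l1})), where L = k_1 I − A_1 is the Laplacian of G_1 and K = k_2 I + A_2 is the signless Laplacian of G_2. -/

import Mathlib

open Matrix

private lemma psd_smul' {V : Type*} [Fintype V] {M : Matrix V V ℝ} (hM : M.PosSemidef)
    {c : ℝ} (hc : 0 ≤ c) : (c • M).PosSemidef := by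
  refine PosSemidef.of_dotProduct_mulVec_nonneg ?_ ?_
  · unfold Matrix.IsHermitian
    rw [conjTranspose_smul, hM.1]
    simp
  · intro x
    simp only [smul_mulVec, dotProduct_smul, smul_eq_mul]
    exact mul_nonneg hc (hM.dotProduct_mulVec_nonneg x)

private lemma psd_diag_nonneg' {V : Type*} [Fintype V] [DecidableEq V] {M : Matrix V V ℝ}
    (hM : M.PosSemidef) (v : V) : 0 ≤ M v v := by
  have := hM.dotProduct_mulVec_nonneg (Pi.single v 1)
  simpa [Matrix.mulVec, dotProduct, Pi.single_apply] using this

private lemma psd_trace_mul_nonneg' {V : Type*} [Fintype V] [DecidableEq V]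
    {E M : Matrix V V ℝ} (hE : Eᵀ = E) (hEE : E * E = E) (hM : M.PosSemidef) :
    0 ≤ (E * M).trace := by
  have h1 : (E * M).trace = (Eᴴ * M * E).trace := by
    rw [conjTranspose_eq_transpose_of_trivial, hE, Matrix.trace_mul_cycle, hEE]
  rw [h1]
  have hpsd : (Eᴴ * M * E).PosSemidef := hM.conjTranspose_mul_mul_same E
  rw [Matrix.trace]
  exact Finset.sum_nonneg fun v _ => psd_diag_nonneg' hpsd v

/-- Let `G₁, G₂` be graphs on the same `n` vertices whose adjacency matrices `A 1, A 2`
belong to a symmetric association scheme with first eigenmatrix `P` and degrees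
`k i = P 0 i`. With `L = k 1 • I - A 1` the Laplacian of `G₁` and `K = k 2 • I + A 2`
the signless Laplacian of `G₂`,
`γ(G₁, G₂) = max {⟨(L + K)/2, M⟩ : M ⪰ 0, diag M = 1}`
equals `(n/2) ((k 1 + k 2) + max_l (P l 2 - P l 1))`. -/
theorem gamma_eq_of_association_scheme
    {V : Type*} [Fintype V] [DecidableEq V] (d : ℕ)
    (A E : Fin (d + 1) → Matrix V V ℝ)
    (P Q : Matrix (Fin (d + 1)) (Fin (d + 1)) ℝ)
    (hA0 : A 0 = 1)
    (hAsym : ∀ i, (A i)ᵀ = A i)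
    (hA01 : ∀ i u v, A i u v = 0 ∨ A i u v = 1)
    (hAsum : ∀ u v, ∑ i, A i u v = 1)
    (hAne : ∀ i, A i ≠ 0)
    (hAmul : ∀ i j, A i * A j ∈ Submodule.span ℝ (Set.range A))
    (hAcomm : ∀ i j, A i * A j = A j * A i)
    (hE0 : E 0 = (Fintype.card V : ℝ)⁻¹ • Matrix.of (fun _ _ => (1 : ℝ)))
    (hEsym : ∀ i, (E i)ᵀ = E i)
    (hEmul : ∀ i j, E i * E j = if i = j then E i else 0)
    (hEsum : ∑ i, E i = 1)
    (hEne : ∀ i, E i ≠ 0)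
    (hP : ∀ i, A i = ∑ l, P l i • E l)
    (hQ : ∀ i, E i = (Fintype.card V : ℝ)⁻¹ • ∑ l, Q l i • A l)
    (hd : 2 ≤ d)
    (G₁ G₂ : SimpleGraph V) [DecidableRel G₁.Adj] [DecidableRel G₂.Adj]
    (hA1 : G₁.adjMatrix ℝ = A 1) (hA2 : G₂.adjMatrix ℝ = A 2) :
    sSup {r : ℝ | ∃ M : Matrix V V ℝ, M.PosSemidef ∧ (∀ v, M v v = 1) ∧
        r = (((1 / 2 : ℝ) • ((P 0 1 • (1 : Matrix V V ℝ) - A 1) +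
              (P 0 2 • (1 : Matrix V V ℝ) + A 2))) * Mᵀ).trace}
      = ((Fintype.card V : ℝ) / 2) * ((P 0 1 + P 0 2) + ⨆ l, (P l 2 - P l 1)) := by
  classical
  -- basic facts
  have hVne : Nonempty V := by
    by_contra h
    rw [not_nonempty_iff] at h
    exact hAne 0 (Subsingleton.elim _ _)
  set n : ℝ := (Fintype.card V : ℝ) with hn
  have hnpos : 0 < n := by
    rw [hn]
    exact_mod_cast Fintype.card_pos
  -- diagonal entries of the A i, i ≠ 0, vanish
  have hAdiag : ∀ i, i ≠ 0 → ∀ v, A i v v = 0 := by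
    intro i hi v
    have h0 : A 0 v v = 1 := by rw [hA0]; simp [Matrix.one_apply]
    have hsplit : A 0 v v + ∑ j ∈ Finset.univ.erase 0, A j v v = 1 := by
      rw [Finset.add_sum_erase Finset.univ (fun j => A j v v) (Finset.mem_univ 0)]
      exact hAsum v v
    have hzero : ∑ j ∈ Finset.univ.erase 0, A j v v = 0 := by linarith
    have := (Finset.sum_eq_zero_iff_of_nonneg (fun j _ => by
      rcases hA01 j v v with h | h <;> simp [h])).mp hzero
    exact this i (Finset.mem_erase.mpr ⟨hi, Finset.mem_univ i⟩)
  -- diagonal entries of the idempotents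
  have hEdiag : ∀ l v, E l v v = Q 0 l / n := by
    intro l v
    rw [hQ l]
    simp only [Matrix.smul_apply, Matrix.sum_apply, smul_eq_mul]
    rw [Finset.sum_eq_single 0]
    · rw [hA0]
      simp [Matrix.one_apply, div_eq_inv_mul, mul_comm]
    · intro j _ hj
      rw [hAdiag j hj v, mul_zero]
    · simp
  have htrE : ∀ l, (E l).trace = Q 0 l := by
    intro l
    rw [Matrix.trace]
    simp only [Matrix.diag_apply, hEdiag]
    rw [Finset.sum_const, Finset.card_univ, nsmul_eq_mul]
    field_simp
    rw [hn, mul_comm]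
  have hEE : ∀ l, E l * E l = E l := by intro l; simpa using hEmul l l
  have hEPsd : ∀ l, (E l).PosSemidef := by
    intro l
    have h : E l = (E l)ᴴ * E l := by
      rw [conjTranspose_eq_transpose_of_trivial, hEsym l, hEE l]
    rw [h]
    exact posSemidef_conjTranspose_mul_self (E l)
  have hq_pos : ∀ l, 0 < Q 0 l := by
    intro l
    rw [← htrE l]
    have hnn : 0 ≤ (E l).trace := by
      rw [Matrix.trace]
      exact Finset.sum_nonneg fun v _ => psd_diag_nonneg' (hEPsd l) v
    rcases lt_or_eq_of_le hnn with h | h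
    · exact h
    · exfalso
      apply hEne l
      have hsq : (E l).trace = ∑ v, ∑ u, (E l u v) ^ 2 := by
        conv_lhs => rw [← hEE l]
        conv_lhs => rw [← hEsym l]
        rw [Matrix.trace]
        simp only [Matrix.diag_apply, Matrix.mul_apply, Matrix.transpose_apply, sq]
        apply Finset.sum_congr rfl
        intro v _
        apply Finset.sum_congr rfl
        intro u _
        rw [show E l v u = E l u v from congrFun (congrFun (hEsym l) u) v]
      rw [hsq] at h
      have hz := (Finset.sum_eq_zero_iff_of_nonneg (fun v _ =>
        Finset.sum_nonneg fun u _ => sq_nonneg _)).mp h.symm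
      ext u v
      have h2 := (Finset.sum_eq_zero_iff_of_nonneg (fun u _ => sq_nonneg (E l u v))).mp
        (hz v (Finset.mem_univ v)) u (Finset.mem_univ u)
      have := (pow_eq_zero_iff (two_ne_zero (α := ℕ))).mp h2
      simpa using this
  -- the coefficients
  set c : Fin (d + 1) → ℝ := fun l => (P 0 1 + P 0 2) + (P l 2 - P l 1) with hc
  -- the matrix decomposition
  have hCdecomp : (P 0 1 • (1 : Matrix V V ℝ) - A 1) + (P 0 2 • (1 : Matrix V V ℝ) + A 2)
      = ∑ l, c l • E l := by
    rw [← hEsum, hP 1, hP 2, Finset.smul_sum, Finset.smul_sum,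
      ← Finset.sum_sub_distrib, ← Finset.sum_add_distrib, ← Finset.sum_add_distrib]
    apply Finset.sum_congr rfl
    intro l _
    simp only [hc]
    module
  -- objective value as a weighted sum
  have hobj : ∀ M : Matrix V V ℝ,
      ((((1 / 2 : ℝ) • ((P 0 1 • (1 : Matrix V V ℝ) - A 1) +
          (P 0 2 • (1 : Matrix V V ℝ) + A 2))) * M).trace)
        = (1 / 2 : ℝ) * ∑ l, c l * (E l * M).trace := by
    intro M
    rw [hCdecomp, smul_mul_assoc, Matrix.trace_smul, smul_eq_mul, Finset.sum_mul,
      Matrix.trace_sum]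
    congr 1
    apply Finset.sum_congr rfl
    intro l _
    rw [smul_mul_assoc, Matrix.trace_smul, smul_eq_mul]
  -- choose the maximizing index
  obtain ⟨l₀, -, hl₀⟩ := Finset.exists_max_image (Finset.univ : Finset (Fin (d + 1)))
    (fun l => P l 2 - P l 1) ⟨0, Finset.mem_univ 0⟩
  have hsup : (⨆ l, (P l 2 - P l 1)) = P l₀ 2 - P l₀ 1 := by
    apply le_antisymm
    · exact ciSup_le fun l => hl₀ l (Finset.mem_univ l)
    · exact le_ciSup (f := fun l => P l 2 - P l 1)
        (Set.Finite.bddAbove (Set.finite_range _)) l₀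
  have hcmax : ∀ l, c l ≤ c l₀ := by
    intro l
    simp only [hc]
    have := hl₀ l (Finset.mem_univ l)
    linarith
  -- the optimal solution
  set Mstar : Matrix V V ℝ := (n / Q 0 l₀) • E l₀ with hMstar
  have hqpos := hq_pos l₀
  have hMpsd : Mstar.PosSemidef :=
    psd_smul' (hEPsd l₀) (le_of_lt (div_pos hnpos hqpos))
  have hMdiag : ∀ v, Mstar v v = 1 := by
    intro v
    simp only [hMstar, Matrix.smul_apply, smul_eq_mul, hEdiag]
    field_simp
  have hMtrace : ∀ l, (E l * Mstar).trace = if l = l₀ then n else 0 := by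
    intro l
    simp only [hMstar, Matrix.mul_smul, Matrix.trace_smul, smul_eq_mul, hEmul]
    by_cases h : l = l₀
    · subst h
      simp [htrE, div_mul_cancel₀, hqpos.ne']
    · simp [h]
  have hMT : Mstarᵀ = Mstar := by
    rw [hMstar, Matrix.transpose_smul, hEsym]
  have hMval : (((1 / 2 : ℝ) • ((P 0 1 • (1 : Matrix V V ℝ) - A 1) +
          (P 0 2 • (1 : Matrix V V ℝ) + A 2))) * Mstarᵀ).trace
      = (n / 2) * ((P 0 1 + P 0 2) + (P l₀ 2 - P l₀ 1)) := by
    rw [hMT, hobj Mstar]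
    rw [Finset.sum_congr rfl fun l _ => by rw [hMtrace l]]
    simp only [mul_ite, mul_zero]
    rw [Finset.sum_ite_eq' Finset.univ l₀ (fun l => c l * n)]
    simp only [Finset.mem_univ, if_true, hc]
    ring
  -- the upper bound
  have hub : ∀ r ∈ {r : ℝ | ∃ M : Matrix V V ℝ, M.PosSemidef ∧ (∀ v, M v v = 1) ∧
        r = (((1 / 2 : ℝ) • ((P 0 1 • (1 : Matrix V V ℝ) - A 1) +
              (P 0 2 • (1 : Matrix V V ℝ) + A 2))) * Mᵀ).trace},
      r ≤ (n / 2) * ((P 0 1 + P 0 2) + (P l₀ 2 - P l₀ 1)) := by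
    rintro r ⟨M, hMpsd', hMdiag', rfl⟩
    have hMT' : Mᵀ = M := by
      rw [← conjTranspose_eq_transpose_of_trivial, hMpsd'.1]
    rw [hMT', hobj M]
    have hx_nonneg : ∀ l, 0 ≤ (E l * M).trace :=
      fun l => psd_trace_mul_nonneg' (hEsym l) (hEE l) hMpsd'
    have hxsum : ∑ l, (E l * M).trace = n := by
      have h1 : ∑ l, (E l * M).trace = ((∑ l, E l) * M).trace := by
        rw [Finset.sum_mul, Matrix.trace_sum]
      rw [h1, hEsum, one_mul, Matrix.trace]
      simp only [Matrix.diag_apply, hMdiag']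
      rw [Finset.sum_const, Finset.card_univ, nsmul_eq_mul, mul_one]
    have hle : ∑ l, c l * (E l * M).trace ≤ c l₀ * n := by
      calc ∑ l, c l * (E l * M).trace
          ≤ ∑ l, c l₀ * (E l * M).trace :=
            Finset.sum_le_sum fun l _ => mul_le_mul_of_nonneg_right (hcmax l) (hx_nonneg l)
        _ = c l₀ * n := by rw [← Finset.mul_sum, hxsum]
    have : (n / 2) * ((P 0 1 + P 0 2) + (P l₀ 2 - P l₀ 1)) = (1 / 2 : ℝ) * (c l₀ * n) := by
      simp only [hc]; ring
    rw [this]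
    exact mul_le_mul_of_nonneg_left hle (by norm_num)
  -- conclude
  rw [hsup]
  apply le_antisymm
  · exact csSup_le ⟨_, ⟨Mstar, hMpsd, hMdiag, rfl⟩⟩ hub
  · exact le_csSup ⟨_, hub⟩ ⟨Mstar, hMpsd, hMdiag, hMval.symm⟩
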